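/- Let n m : ℕ with m ≥ 2, let μ be a 3CNF over X = Fin n ⊕ Fin m, and let t : Fin m → Bool be such that every clause of μ contains a literal (Sum.inr j, s) with t j = s. Consider assignments q = (v, v', y, w) with v, v' : Fin n → Bool, y : Fin m → Bool, w : Fin (m − 1) → Bool, indexed by the variable set Fin n ⊕ Fin n ⊕ Fin m ⊕ Fin (m − 1), and define Φ q = true iff: (i) every clause of μ contains a literal that is true under the valuation sending (Sum.inl i, true) to v i, (Sum.inl i, false) to v' i, and (Sum.inr j, s) to decide (y j = s); (ii) (a, w) satisfies the chain condition, where a j = decide (y j ≠ t j); and (iii) for every i : Fin n, w (m − 2) = true → v i = v' i. Let t' be the assignment with v and v' constantly false, y = t, and w constantly true (which satisfies Φ). Then there is a defining set of size at most n for ({q | Φ q = true}, t') if and only if there exists x : Fin n → Bool such that every y : Fin m → Bool making all clauses of μ true under Sum.elim x y equals t. -/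

import Mathlib

/-- A literal over the variable set `X`. -/
abbrev Lit (X : Type*) := X × Bool

/-- A 3-clause over `X`: an ordered triple of literals. -/
abbrev Clause3 (X : Type*) := Lit X × Lit X × Lit X

/-- A literal `(p, s)` is true under `σ` iff `σ p = s`. -/
def litEval {X : Type*} (σ : X → Bool) (l : Lit X) : Bool := σ l.1 == l.2

/-- A clause is true under `σ` iff at least one of its three literals is true. -/
def clauseEval {X : Type*} (σ : X → Bool) (c : Clause3 X) : Bool :=
  litEval σ c.1 || litEval σ c.2.1 || litEval σ c.2.2

/-- `D` is a defining set for `(F, s)`: `s ∈ F` and `s` is the unique element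
of `F` agreeing with `s` at every element of `D`. -/
def IsDefiningSet {V R : Type*} (F : Set (V → R)) (s : V → R) (D : Finset V) : Prop :=
  s ∈ F ∧ ∀ f ∈ F, (∀ x ∈ D, f x = s x) → f = s

/-- The chain condition encoding the clause chain
`(a₁ ∨ a₂ ∨ w₁) ∧ (¬w₁ ∨ a₃ ∨ w₂) ∧ ⋯ ∧ (¬w_{m−2} ∨ a_m ∨ w_{m−1})`. -/
def ChainCond {m : ℕ} (hm : 2 ≤ m) (a : Fin m → Bool) (w : Fin (m - 1) → Bool) : Prop :=
  (a ⟨0, by omega⟩ || a ⟨1, by omega⟩ || w ⟨0, by omega⟩) = true ∧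
  ∀ i : Fin (m - 1), 1 ≤ (i : ℕ) →
    (!(w ⟨(i : ℕ) - 1, by have := i.isLt; omega⟩) ||
      a ⟨(i : ℕ) + 1, by have := i.isLt; omega⟩ || w i) = true

/-- The variable set of the constructed formula `φ(v, v', y, w)`:
the variables `vᵢ`, `v'ᵢ`, `yⱼ`, `wᵢ`. -/
abbrev V4 (n m : ℕ) := Fin n ⊕ (Fin n ⊕ (Fin m ⊕ Fin (m - 1)))

/-- The valuation of literals of `μ` induced by an assignment `q` of the
new variables: `(Sum.inl i, true) ↦ vᵢ`, `(Sum.inl i, false) ↦ v'ᵢ`,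
`(Sum.inr j, s) ↦ decide (yⱼ = s)`. -/
def litVal {n m : ℕ} (q : V4 n m → Bool) : Lit (Fin n ⊕ Fin m) → Bool
  | (Sum.inl i, true) => q (Sum.inl i)
  | (Sum.inl i, false) => q (Sum.inr (Sum.inl i))
  | (Sum.inr j, s) => decide (q (Sum.inr (Sum.inr (Sum.inl j))) = s)

/-- The semantic satisfaction relation `Φ` of the formula `φ(v, v', y, w)`
constructed in the proof of Theorem 2.4. -/
def Phi {n m : ℕ} (hm : 2 ≤ m) (μ : List (Clause3 (Fin n ⊕ Fin m)))
    (t : Fin m → Bool) (q : V4 n m → Bool) : Prop :=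
  (∀ c ∈ μ, (litVal q c.1 || litVal q c.2.1 || litVal q c.2.2) = true) ∧
  ChainCond hm (fun j => decide (q (Sum.inr (Sum.inr (Sum.inl j))) ≠ t j))
    (fun i => q (Sum.inr (Sum.inr (Sum.inr i)))) ∧
  (∀ i : Fin n,
    q (Sum.inr (Sum.inr (Sum.inr ⟨m - 2, by omega⟩))) = true →
      q (Sum.inl i) = q (Sum.inr (Sum.inl i)))

/-- The distinguished assignment `t'`: `v` and `v'` constantly false,
`y = t`, `w` constantly true. -/
def tPrime {n m : ℕ} (t : Fin m → Bool) : V4 n m → Bool :=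
  Sum.elim (fun _ => false)
    (Sum.elim (fun _ => false) (Sum.elim t (fun _ => true)))


lemma chain_all_true {m : ℕ} (hm : 2 ≤ m) {a : Fin m → Bool} {w : Fin (m - 1) → Bool}
    (h : ChainCond hm a w) (ha : ∀ j, a j = false) : ∀ i, w i = true := by
  suffices H : ∀ k (hk : k < m - 1), w ⟨k, hk⟩ = true by
    intro i; exact H i i.isLt
  intro k
  induction k with
  | zero =>
    intro hk
    have h0 := h.1
    rw [ha, ha] at h0
    simpa using h0
  | succ k ih =>
    intro hk
    have h1 := h.2 ⟨k + 1, hk⟩ (by simp)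
    rw [ha] at h1
    simp only [Nat.add_sub_cancel] at h1
    rw [ih (by omega)] at h1
    simpa using h1

lemma chain_of_witness {m : ℕ} (hm : 2 ≤ m) (a : Fin m → Bool) (j0 : Fin m) (hj : a j0 = true) :
    ChainCond hm a (fun i => decide ((i : ℕ) + 1 < (j0 : ℕ))) := by
  constructor
  · by_cases h : 1 < (j0 : ℕ)
    · simp [h]
    · have h0 : (j0 : ℕ) = 0 ∨ (j0 : ℕ) = 1 := by omega
      rcases h0 with h0 | h0
      · have hj0 : j0 = ⟨0, by omega⟩ := Fin.ext h0
        rw [hj0] at hj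
        simp [hj]
      · have hj0 : j0 = ⟨1, by omega⟩ := Fin.ext h0
        rw [hj0] at hj
        simp [hj]
  · intro i hi
    rcases lt_trichotomy ((i : ℕ) + 1) (j0 : ℕ) with h | h | h
    · simp [h]
    · have hj0 : j0 = ⟨(i : ℕ) + 1, by have := j0.isLt; omega⟩ := Fin.ext h.symm
      rw [hj0] at hj
      simp [hj]
    · have hw : ¬ ((i : ℕ) - 1 + 1 < (j0 : ℕ)) := by omega
      simp [hw]

lemma litVal_mono {n m : ℕ} (f : V4 n m → Bool) (x : Fin n → Bool)
    (hpos : ∀ i, f (Sum.inl i) = true → x i = true)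
    (hneg : ∀ i, f (Sum.inr (Sum.inl i)) = true → x i = false)
    (l : Lit (Fin n ⊕ Fin m)) (hl : litVal f l = true) :
    litEval (Sum.elim x (fun j => f (Sum.inr (Sum.inr (Sum.inl j))))) l = true := by
  rcases l with ⟨i | j, b⟩
  · cases b
    · simp only [litVal] at hl
      simp [litEval, hneg i hl]
    · simp only [litVal] at hl
      simp [litEval, hpos i hl]
  · simp only [litVal, decide_eq_true_eq] at hl
    simp [litEval, hl]

lemma tPrime_mem {n m : ℕ} (hm : 2 ≤ m) (μ : List (Clause3 (Fin n ⊕ Fin m)))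
    (t : Fin m → Bool)
    (ht : ∀ c ∈ μ, ∃ (j : Fin m) (s : Bool), t j = s ∧
      (c.1 = (Sum.inr j, s) ∨ c.2.1 = (Sum.inr j, s) ∨ c.2.2 = (Sum.inr j, s))) :
    Phi hm μ t (tPrime (n := n) t) := by
  refine ⟨?_, ⟨by simp [tPrime], fun i hi => by simp [tPrime]⟩, fun i _ => rfl⟩
  intro c hc
  obtain ⟨j, s, hts, h | h | h⟩ := ht c hc <;>
    rw [h] <;> simp [litVal, tPrime, hts]

/-- Correctness of the reduction in Theorem 2.4: `(Φ, t')` has a defining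
set of size at most `n` iff `∃x ∃!_t y μ(x, y)`. -/
theorem stmt_6 (n m : ℕ) (hm : 2 ≤ m) (μ : List (Clause3 (Fin n ⊕ Fin m)))
    (t : Fin m → Bool)
    (ht : ∀ c ∈ μ, ∃ (j : Fin m) (s : Bool), t j = s ∧
      (c.1 = (Sum.inr j, s) ∨ c.2.1 = (Sum.inr j, s) ∨ c.2.2 = (Sum.inr j, s))) :
    (∃ D : Finset (V4 n m), D.card ≤ n ∧
        IsDefiningSet {q | Phi hm μ t q} (tPrime t) D) ↔
    (∃ x : Fin n → Bool, ∀ y : Fin m → Bool,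
        (∀ c ∈ μ, clauseEval (Sum.elim x y) c = true) → y = t) := by
  constructor
  · rintro ⟨D, hcard, hds⟩
    have hdef := hds.2
    have hpair : ∀ i : Fin n, Sum.inl i ∈ D ∨ Sum.inr (Sum.inl i) ∈ D := by
      intro i
      by_contra hcon
      push_neg at hcon
      obtain ⟨h1, h2⟩ := hcon
      set g : V4 n m → Bool := fun d =>
        if d = Sum.inl i ∨ d = Sum.inr (Sum.inl i) then true else tPrime t d with hgdef
      have hgPhi : Phi hm μ t g := by
        refine ⟨?_, ⟨by simp [g, tPrime], fun i' hi' => by simp [g, tPrime]⟩, ?_⟩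
        · intro c hc
          obtain ⟨j, s, hts, h | h | h⟩ := ht c hc <;>
            rw [h] <;> simp [litVal, g, tPrime, hts]
        · intro i' _
          by_cases h : i' = i
          · subst h; simp [g]
          · simp [g, tPrime, h]
      have hgne : g ≠ tPrime t := by
        intro h
        have := congrFun h (Sum.inl i)
        simp [g, tPrime] at this
      apply hgne
      apply hdef g hgPhi
      intro d hd
      have hd1 : d ≠ Sum.inl i := fun h => h1 (h ▸ hd)
      have hd2 : d ≠ Sum.inr (Sum.inl i) := fun h => h2 (h ▸ hd)
      simp [g, hd1, hd2]
    set e : Fin n → V4 n m :=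
      fun i => if Sum.inl i ∈ D then Sum.inl i else Sum.inr (Sum.inl i) with he
    have heD : ∀ i, e i ∈ D := by
      intro i
      rcases hpair i with h | h
      · simp [e, h]
      · by_cases h' : Sum.inl i ∈ D
        · simp [e, h']
        · simp [e, h', h]
    have hinj : Function.Injective e := by
      intro i i' hii
      simp only [e] at hii
      split_ifs at hii <;>
        first
          | exact Sum.inl.inj hii
          | exact Sum.inl.inj (Sum.inr.inj hii)
    have hDeq : Finset.univ.image e = D := by
      apply Finset.eq_of_subset_of_card_le
      · intro d hd
        simp only [Finset.mem_image] at hd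
        obtain ⟨i, _, rfl⟩ := hd
        exact heD i
      · rwa [Finset.card_image_of_injective _ hinj, Finset.card_univ, Fintype.card_fin]
    set x : Fin n → Bool := fun i => decide (Sum.inl i ∉ D) with hx
    refine ⟨x, ?_⟩
    intro y hy
    by_contra hne
    obtain ⟨j0, hj0⟩ := Function.ne_iff.mp hne
    set f : V4 n m → Bool :=
      Sum.elim x (Sum.elim (fun i => !x i)
        (Sum.elim y (fun i => decide ((i : ℕ) + 1 < (j0 : ℕ))))) with hf
    have hlit : ∀ l, litVal f l = litEval (Sum.elim x y) l := by
      rintro ⟨i | j, b⟩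
      · cases b <;> simp [litVal, litEval, f]
      · cases b <;> simp [litVal, litEval, f] <;> by_cases h : y j <;> simp [h]
    have hfPhi : Phi hm μ t f := by
      refine ⟨?_, ?_, ?_⟩
      · intro c hc
        have h := hy c hc
        unfold clauseEval at h
        rw [hlit, hlit, hlit]
        exact h
      · exact chain_of_witness hm _ j0 (by simp [f, hj0])
      · intro i hw
        exfalso
        simp only [f, Sum.elim_inr, decide_eq_true_eq] at hw
        have := j0.isLt
        omega
    have hagree : ∀ d ∈ D, f d = tPrime t d := by
      intro d hd
      rw [← hDeq] at hd
      simp only [Finset.mem_image, Finset.mem_univ, true_and] at hd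
      obtain ⟨i, rfl⟩ := hd
      by_cases h : Sum.inl i ∈ D
      · simp [e, h, f, x, tPrime]
      · simp [e, h, f, x, tPrime]
    have := congrFun (hdef f hfPhi hagree) (Sum.inr (Sum.inr (Sum.inl j0)))
    simp only [f, Sum.elim_inr, tPrime] at this
    exact hj0 this
  · rintro ⟨x, hx⟩
    refine ⟨Finset.univ.image (fun i => if x i then Sum.inr (Sum.inl i) else Sum.inl i),
      le_trans Finset.card_image_le (by simp), tPrime_mem hm μ t ht, ?_⟩
    intro f hfPhi hagree
    have hcl := (hfPhi : Phi hm μ t f).1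
    have hch := (hfPhi : Phi hm μ t f).2.1
    have hvv := (hfPhi : Phi hm μ t f).2.2
    have hpos : ∀ i, f (Sum.inl i) = true → x i = true := by
      intro i hfi
      cases hxi : x i
      · have := hagree (Sum.inl i) (by
          refine Finset.mem_image.mpr ⟨i, Finset.mem_univ i, ?_⟩
          simp [hxi])
        simp only [tPrime, Sum.elim_inl] at this
        rw [this] at hfi
        simp at hfi
      · rfl
    have hneg : ∀ i, f (Sum.inr (Sum.inl i)) = true → x i = false := by
      intro i hfi
      cases hxi : x i
      · rfl
      · have := hagree (Sum.inr (Sum.inl i)) (by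
          refine Finset.mem_image.mpr ⟨i, Finset.mem_univ i, ?_⟩
          simp [hxi])
        simp only [tPrime, Sum.elim_inr, Sum.elim_inl] at this
        rw [this] at hfi
        simp at hfi
    have hmu : ∀ c ∈ μ,
        clauseEval (Sum.elim x (fun j => f (Sum.inr (Sum.inr (Sum.inl j))))) c = true := by
      intro c hc
      have h := hcl c hc
      rw [Bool.or_eq_true, Bool.or_eq_true] at h
      unfold clauseEval
      rcases h with (h | h) | h
      · rw [litVal_mono f x hpos hneg _ h]; simp
      · rw [litVal_mono f x hpos hneg _ h]; simp
      · rw [litVal_mono f x hpos hneg _ h]; simp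
    have hyt : (fun j => f (Sum.inr (Sum.inr (Sum.inl j)))) = t := hx _ hmu
    have hwall : ∀ i : Fin (m - 1), f (Sum.inr (Sum.inr (Sum.inr i))) = true := by
      have ha : ∀ j, decide (f (Sum.inr (Sum.inr (Sum.inl j))) ≠ t j) = false := by
        intro j
        have := congrFun hyt j
        simp [this]
      exact chain_all_true hm hch ha
    have hveq : ∀ i, f (Sum.inl i) = f (Sum.inr (Sum.inl i)) := fun i => hvv i (hwall _)
    have hv0 : ∀ i, f (Sum.inl i) = false := by
      intro i
      cases hxi : x i
      · exact hagree (Sum.inl i) (by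
          refine Finset.mem_image.mpr ⟨i, Finset.mem_univ i, ?_⟩
          simp [hxi])
      · rw [hveq i]
        exact hagree (Sum.inr (Sum.inl i)) (by
          refine Finset.mem_image.mpr ⟨i, Finset.mem_univ i, ?_⟩
          simp [hxi])
    funext d
    rcases d with i | i | j | i
    · exact hv0 i
    · rw [← hveq i]; exact hv0 i
    · exact congrFun hyt j
    · exact hwall i
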